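/- If k and l are natural numbers with 0 < k and 0 < l, ξ is an ordinal, a is a (k+1)-element set of ordinals ≥ ξ, b is a k-element set of ordinals ≥ ξ, and α ∈ a is such that E_{l+1}^ξ(a \ {α}, b) holds, then there exists an ordinal β with ξ ≤ β and β ∉ b such that E_l^ξ(a, b ∪ {β}) holds. -/

import Mathlib

/-- The increasing enumeration of a finite set of ordinals, with the ordinal `ξ`
prepended at index `0` (so index `i + 1` gives the `i`-th element of `a` in
increasing order). -/
noncomputable def finsetEnum (ξ : Ordinal) (a : Finset Ordinal) : ℕ → Ordinal
  | 0 => ξ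
  | (i + 1) => (a.sort (· ≤ ·)).getD i 0

/-- The relation `E_l^ξ` on finite sets of ordinals. -/
def ERel (l : ℕ) (ξ : Ordinal) (a b : Finset Ordinal) : Prop :=
  a.card = b.card ∧
    ∀ i < a.card, ∃ μ ν ρ : Ordinal,
      finsetEnum ξ a (i + 1) = finsetEnum ξ a i + Ordinal.omega0 ^ (l : Ordinal) * μ + ρ ∧
      finsetEnum ξ b (i + 1) = finsetEnum ξ b i + Ordinal.omega0 ^ (l : Ordinal) * ν + ρ ∧
      ρ < Ordinal.omega0 ^ (l : Ordinal) ∧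
      (min μ ν = 0 → μ = 0 ∧ ν = 0)

open Ordinal List

/-- absorption -/
lemma absorb {n x c : Ordinal} (hx : x < Ordinal.omega0 ^ n) (hc : c ≠ 0) :
    x + Ordinal.omega0 ^ n * c = Ordinal.omega0 ^ n * c := by
  have h1 : (1 : Ordinal) ≤ c := Ordinal.one_le_iff_ne_zero.mpr hc
  have h2 : (1 : Ordinal) + (c - 1) = c := Ordinal.add_sub_cancel_of_le h1
  calc x + Ordinal.omega0 ^ n * c = x + Ordinal.omega0 ^ n * (1 + (c - 1)) := by rw [h2]
    _ = x + (Ordinal.omega0 ^ n + Ordinal.omega0 ^ n * (c - 1)) := by rw [mul_add, mul_one]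
    _ = (x + Ordinal.omega0 ^ n) + Ordinal.omega0 ^ n * (c - 1) := by rw [add_assoc]
    _ = Ordinal.omega0 ^ n + Ordinal.omega0 ^ n * (c - 1) := by rw [Ordinal.add_omega0_opow hx]
    _ = Ordinal.omega0 ^ n * (1 + (c - 1)) := by rw [mul_add, mul_one]
    _ = _ := by rw [h2]

lemma omega_succ_pow (l : ℕ) :
    Ordinal.omega0 ^ ((l : Ordinal) + 1) = Ordinal.omega0 ^ (l : Ordinal) * Ordinal.omega0 := by
  rw [← Order.succ_eq_add_one, Ordinal.opow_succ]

/-- downgrade a base-ω^(l+1) segment relation to base ω^l -/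
lemma downgrade (l : ℕ) (A A' B B' μ ν ρ : Ordinal)
    (h1 : A' = A + Ordinal.omega0 ^ ((l : Ordinal) + 1) * μ + ρ)
    (h2 : B' = B + Ordinal.omega0 ^ ((l : Ordinal) + 1) * ν + ρ)
    (h3 : ρ < Ordinal.omega0 ^ ((l : Ordinal) + 1))
    (h4 : min μ ν = 0 → μ = 0 ∧ ν = 0) :
    ∃ μ' ν' ρ' : Ordinal,
      A' = A + Ordinal.omega0 ^ (l : Ordinal) * μ' + ρ' ∧
      B' = B + Ordinal.omega0 ^ (l : Ordinal) * ν' + ρ' ∧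
      ρ' < Ordinal.omega0 ^ (l : Ordinal) ∧
      (min μ' ν' = 0 → μ' = 0 ∧ ν' = 0) := by
  set w : Ordinal := Ordinal.omega0 ^ (l : Ordinal) with hw
  have hw0 : w ≠ 0 := (Ordinal.opow_pos _ Ordinal.omega0_pos).ne'
  set d : Ordinal := ρ / w with hd
  set ρ' : Ordinal := ρ % w with hρ'
  have hdm : w * d + ρ' = ρ := Ordinal.div_add_mod ρ w
  have key : ∀ x μ₀ : Ordinal, x + Ordinal.omega0 ^ ((l : Ordinal) + 1) * μ₀ + ρ =
      x + w * (Ordinal.omega0 * μ₀ + d) + ρ' := by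
    intro x μ₀
    rw [mul_add, omega_succ_pow l, ← hdm]
    rw [mul_assoc]
    rw [add_assoc, add_assoc, add_assoc]
  refine ⟨Ordinal.omega0 * μ + d, Ordinal.omega0 * ν + d, ρ', ?_, ?_, Ordinal.mod_lt _ hw0, ?_⟩
  · rw [h1, key]
  · rw [h2, key]
  · intro hmin
    have hor : Ordinal.omega0 * μ + d = 0 ∨ Ordinal.omega0 * ν + d = 0 := by
      rcases min_cases (Ordinal.omega0 * μ + d) (Ordinal.omega0 * ν + d) with ⟨he, _⟩ | ⟨he, _⟩
      · exact Or.inl (he ▸ hmin)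
      · exact Or.inr (he ▸ hmin)
    have hres : μ = 0 ∧ ν = 0 ∧ d = 0 := by
      rcases hor with he | he
      · obtain ⟨hm, hd0⟩ := Ordinal.add_eq_zero_iff.mp he
        have hμ0 : μ = 0 := by
          rcases mul_eq_zero.mp hm with h | h
          · exact absurd h Ordinal.omega0_ne_zero
          · exact h
        exact ⟨hμ0, (h4 (by simp [hμ0])).2, hd0⟩
      · obtain ⟨hm, hd0⟩ := Ordinal.add_eq_zero_iff.mp he
        have hν0 : ν = 0 := by
          rcases mul_eq_zero.mp hm with h | h
          · exact absurd h Ordinal.omega0_ne_zero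
          · exact h
        exact ⟨(h4 (by simp [hν0])).1, hν0, hd0⟩
    simp [hres.1, hres.2.1, hres.2.2]

lemma key_construct (l : ℕ) (A B α' A' B' μ ν ρ : Ordinal)
    (hA : A ≤ α') (hαlt : α' < A')
    (h1 : A' = A + Ordinal.omega0 ^ ((l : Ordinal) + 1) * μ + ρ)
    (h2 : B' = B + Ordinal.omega0 ^ ((l : Ordinal) + 1) * ν + ρ)
    (h3 : ρ < Ordinal.omega0 ^ ((l : Ordinal) + 1))
    (h4 : min μ ν = 0 → μ = 0 ∧ ν = 0) :
    ∃ β : Ordinal, B ≤ β ∧ β < B' ∧ (A < α' → B < β) ∧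
      (∃ μ₁ ν₁ ρ₁ : Ordinal,
        α' = A + Ordinal.omega0 ^ (l : Ordinal) * μ₁ + ρ₁ ∧
        β = B + Ordinal.omega0 ^ (l : Ordinal) * ν₁ + ρ₁ ∧
        ρ₁ < Ordinal.omega0 ^ (l : Ordinal) ∧
        (min μ₁ ν₁ = 0 → μ₁ = 0 ∧ ν₁ = 0)) ∧
      (∃ μ₂ ν₂ ρ₂ : Ordinal,
        A' = α' + Ordinal.omega0 ^ (l : Ordinal) * μ₂ + ρ₂ ∧
        B' = β + Ordinal.omega0 ^ (l : Ordinal) * ν₂ + ρ₂ ∧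
        ρ₂ < Ordinal.omega0 ^ (l : Ordinal) ∧
        (min μ₂ ν₂ = 0 → μ₂ = 0 ∧ ν₂ = 0)) := by
  set w : Ordinal := Ordinal.omega0 ^ (l : Ordinal) with hw
  set W : Ordinal := Ordinal.omega0 ^ ((l : Ordinal) + 1) with hW
  have hw0 : w ≠ 0 := (Ordinal.opow_pos _ Ordinal.omega0_pos).ne'
  have hW0 : W ≠ 0 := (Ordinal.opow_pos _ Ordinal.omega0_pos).ne'
  set σ : Ordinal := α' - A with hσdef
  have hσ : A + σ = α' := Ordinal.add_sub_cancel_of_le hA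
  have hσlt : σ < W * μ + ρ := by
    have : A + σ < A + (W * μ + ρ) := by
      rw [hσ, ← add_assoc, ← h1]; exact hαlt
    exact (add_lt_add_iff_left A).mp this
  rcases le_or_gt (W * μ) σ with hc | hc
  · -- case σ ≥ W*μ
    set σ₂ : Ordinal := σ - W * μ with hσ₂def
    have hσ₂ : W * μ + σ₂ = σ := Ordinal.add_sub_cancel_of_le hc
    have hσ₂ρ : σ₂ < ρ := by
      have : W * μ + σ₂ < W * μ + ρ := by rw [hσ₂]; exact hσlt
      exact (add_lt_add_iff_left _).mp this
    refine ⟨B + W * ν + σ₂, ?_, ?_, ?_, ?_, ?_⟩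
    · calc B ≤ B + W * ν := le_self_add
        _ ≤ B + W * ν + σ₂ := le_self_add
    · rw [h2]; exact add_lt_add_right hσ₂ρ _
    · intro hAα
      have hσ0 : σ ≠ 0 := by
        intro h0; rw [h0, add_zero] at hσ; exact absurd hσ (ne_of_lt hAα)
      have : W * ν + σ₂ ≠ 0 := by
        intro h0
        obtain ⟨hm, hs⟩ := Ordinal.add_eq_zero_iff.mp h0
        have hν0 : ν = 0 := by
          rcases mul_eq_zero.mp hm with h | h
          · exact absurd h hW0
          · exact h
        have hμ0 : μ = 0 := (h4 (by simp [hν0])).1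
        rw [hμ0, mul_zero] at hσ₂; rw [zero_add] at hσ₂
        exact hσ0 (hσ₂ ▸ hs)
      calc B = B + 0 := (add_zero _).symm
        _ < B + (W * ν + σ₂) := add_lt_add_right (pos_iff_ne_zero.mpr this) _
        _ = B + W * ν + σ₂ := (add_assoc _ _ _).symm
    · -- segment 1 via downgrade
      have e1 : α' = A + W * μ + σ₂ := by rw [← hσ, ← hσ₂, add_assoc]
      exact downgrade l A α' B (B + W * ν + σ₂) μ ν σ₂ e1 rfl (hσ₂ρ.trans h3) h4
    · -- segment 2 via downgrade with μ=ν=0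
      set τ : Ordinal := ρ - σ₂ with hτdef
      have hτ : σ₂ + τ = ρ := Ordinal.add_sub_cancel_of_le hσ₂ρ.le
      have e1 : A' = α' + W * 0 + τ := by
        rw [mul_zero, add_zero, h1, ← hσ, ← hσ₂, ← hτ]
        simp [add_assoc]
      have e2 : B' = (B + W * ν + σ₂) + W * 0 + τ := by
        rw [mul_zero, add_zero, h2, ← hτ]
        simp [add_assoc]
      have hτlt : τ < W := lt_of_le_of_lt (Ordinal.sub_le_self _ _) h3
      exact downgrade l α' A' (B + W * ν + σ₂) B' 0 0 τ e1 e2 hτlt (by simp)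
  · -- case σ < W*μ
    have hμ0 : μ ≠ 0 := by
      intro h0; rw [h0, mul_zero] at hc; exact absurd hc not_lt_zero
    have hν0 : ν ≠ 0 := by
      intro h0
      exact hμ0 (h4 (by simp [h0])).1
    set μ₁ : Ordinal := σ / w with hμ₁def
    set ρ₁ : Ordinal := σ % w with hρ₁def
    have hdm : w * μ₁ + ρ₁ = σ := Ordinal.div_add_mod σ w
    set ν₁ : Ordinal := min μ₁ 1 with hν₁def
    have hν₁le : ν₁ ≤ 1 := min_le_right _ _
    have hsmall : w * ν₁ + ρ₁ < W := by
      have h1' : w * ν₁ ≤ w := by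
        calc w * ν₁ ≤ w * 1 := mul_le_mul_right hν₁le _
          _ = w := mul_one _
      have : w * ν₁ + ρ₁ < w + w :=
        lt_of_le_of_lt (add_le_add_left h1' _) (add_lt_add_right (Ordinal.mod_lt _ hw0) _)
      refine this.trans_le ?_
      have h2w : w + w = w * 2 := by
        rw [show (2:Ordinal) = 1 + 1 from (one_add_one_eq_two).symm, mul_add, mul_one]
      rw [h2w, hW, omega_succ_pow l]
      exact mul_le_mul_right (Ordinal.nat_lt_omega0 2).le _
    refine ⟨B + w * ν₁ + ρ₁, ?_, ?_, ?_, ?_, ?_⟩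
    · calc B ≤ B + w * ν₁ := le_self_add
        _ ≤ _ := le_self_add
    · rw [h2, add_assoc, add_assoc]
      apply add_lt_add_right
      calc w * ν₁ + ρ₁ < W := hsmall
        _ = W * 1 := (mul_one _).symm
        _ ≤ W * ν := mul_le_mul_right (Ordinal.one_le_iff_ne_zero.mpr hν0) _
        _ ≤ W * ν + ρ := le_self_add
    · intro hAα
      have hσ0 : σ ≠ 0 := by
        intro h0; rw [h0, add_zero] at hσ; exact absurd hσ (ne_of_lt hAα)
      have : w * ν₁ + ρ₁ ≠ 0 := by
        intro h0
        obtain ⟨hm, hs⟩ := Ordinal.add_eq_zero_iff.mp h0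
        have hν₁0 : ν₁ = 0 := by
          rcases mul_eq_zero.mp hm with h | h
          · exact absurd h hw0
          · exact h
        have hμ₁0 : μ₁ = 0 := by
          by_contra hmm
          have h1le : (1 : Ordinal) ≤ μ₁ := Ordinal.one_le_iff_ne_zero.mpr hmm
          rw [hν₁def, min_eq_right h1le] at hν₁0
          exact one_ne_zero hν₁0
        exact hσ0 (by rw [← hdm, hμ₁0, hs, mul_zero, add_zero])
      calc B = B + 0 := (add_zero _).symm
        _ < B + (w * ν₁ + ρ₁) := add_lt_add_right (pos_iff_ne_zero.mpr this) _
        _ = B + w * ν₁ + ρ₁ := (add_assoc _ _ _).symm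
    · -- segment 1 direct
      refine ⟨μ₁, ν₁, ρ₁, ?_, rfl, Ordinal.mod_lt _ hw0, ?_⟩
      · rw [← hσ, ← hdm, add_assoc]
      · intro hmin
        rcases min_cases μ₁ ν₁ with ⟨he, _⟩ | ⟨he, hle⟩
        · have hm1 : μ₁ = 0 := he ▸ hmin
          exact ⟨hm1, by simp [hν₁def, hm1]⟩
        · have hn1 : ν₁ = 0 := he ▸ hmin
          have : μ₁ = 0 := by
            rcases min_cases μ₁ (1 : Ordinal) with ⟨he2, _⟩ | ⟨he2, hle2⟩
            · rw [hν₁def] at hn1; rw [he2] at hn1; exact hn1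
            · rw [hν₁def] at hn1; rw [he2] at hn1; exact absurd hn1 one_ne_zero
          exact ⟨this, hn1⟩
    · -- segment 2
      set κ : Ordinal := σ / W with hκdef
      have hκμ : κ < μ := (Ordinal.div_lt hW0).mpr hc
      set μ₂ : Ordinal := μ - κ with hμ₂def
      have hκμ₂ : κ + μ₂ = μ := Ordinal.add_sub_cancel_of_le hκμ.le
      have hμ₂0 : μ₂ ≠ 0 := by
        intro h0; rw [h0, add_zero] at hκμ₂; exact absurd hκμ₂ (ne_of_lt hκμ)
      set σ' : Ordinal := σ % W with hσ'def
      have hdm2 : W * κ + σ' = σ := Ordinal.div_add_mod σ W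
      have e1 : A' = α' + W * μ₂ + ρ := by
        rw [h1, ← hσ, ← hκμ₂, mul_add, ← hdm2]
        rw [add_assoc (A + (W * κ + σ'))]
        rw [add_assoc A (W * κ + σ')]
        rw [add_assoc (W * κ) σ' (W * μ₂ + ρ)]
        rw [← add_assoc σ' (W * μ₂) ρ]
        rw [absorb (Ordinal.mod_lt _ hW0) hμ₂0]
        simp only [add_assoc, hW, omega_succ_pow l, mul_assoc]
      have habs : (w * ν₁ + ρ₁) + W * ν = W * ν := absorb hsmall hν0
      have htail : (w * ν₁ + ρ₁) + (W * ν + ρ) = W * ν + ρ := by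
        rw [← add_assoc, habs]
      have e2 : B' = (B + w * ν₁ + ρ₁) + W * ν + ρ := by
        have hrhs : (B + w * ν₁ + ρ₁) + W * ν + ρ = B + ((w * ν₁ + ρ₁) + (W * ν + ρ)) := by
          simp [add_assoc]
        rw [hrhs, htail, h2, add_assoc]
      exact downgrade l α' A' (B + w * ν₁ + ρ₁) B' μ₂ ν ρ e1 e2 h3 (by
        intro hmin
        exfalso
        rcases min_cases μ₂ ν with ⟨he, _⟩ | ⟨he, _⟩
        · exact hμ₂0 (he ▸ hmin)
        · exact hν0 (he ▸ hmin))

lemma sorted_le_getD {L : List Ordinal} (hs : L.Pairwise (· ≤ ·)) {i j : ℕ}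
    (hij : i ≤ j) (hj : j < L.length) : L.getD i 0 ≤ L.getD j 0 := by
  have hi : i < L.length := lt_of_le_of_lt hij hj
  rw [List.getD_eq_getElem L 0 hi, List.getD_eq_getElem L 0 hj]
  rcases lt_or_eq_of_le hij with h | h
  · exact List.pairwise_iff_getElem.mp hs i j hi hj h
  · subst h; exact le_rfl

lemma mem_dropWhile_ge {x : Ordinal} : ∀ {L : List Ordinal}, L.Pairwise (· ≤ ·) →
    ∀ {y : Ordinal}, y ∈ L.dropWhile (fun z => decide (z < x)) → x ≤ y := by
  intro L
  induction L with
  | nil => intro _ y hy; simp at hy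
  | cons h t ih =>
    intro hs y hy
    rw [List.dropWhile_cons] at hy
    by_cases hh : h < x
    · simp only [hh, decide_true, if_true] at hy
      exact ih hs.of_cons hy
    · simp only [hh, decide_false, if_false] at hy
      rcases List.mem_cons.mp hy with rfl | hyt
      · exact le_of_not_gt hh
      · exact (le_of_not_gt hh).trans ((List.pairwise_cons.mp hs).1 y hyt)

lemma sort_insert_split (x : Ordinal) (s : Finset Ordinal) (hx : x ∉ s) (j : ℕ)
    (h1 : ∀ y ∈ (s.sort (· ≤ ·)).take j, y < x)
    (h2 : ∀ y ∈ (s.sort (· ≤ ·)).drop j, x < y) :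
    (insert x s).sort (· ≤ ·) =
      (s.sort (· ≤ ·)).take j ++ x :: (s.sort (· ≤ ·)).drop j := by
  set L : List Ordinal := s.sort (· ≤ ·) with hL
  refine (fun hp hs₂ => List.Perm.eq_of_pairwise' (Finset.pairwise_sort _ _) hs₂ hp) ?_ ?_
  · calc (insert x s).sort (· ≤ ·) ~ (insert x s).toList := Finset.sort_perm_toList _ _
      _ ~ x :: s.toList := Finset.toList_insert hx
      _ ~ x :: L := List.Perm.cons x (Finset.sort_perm_toList _ _).symm
      _ = x :: (L.take j ++ L.drop j) := by rw [List.take_append_drop]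
      _ ~ L.take j ++ x :: L.drop j := List.perm_middle.symm
  · rw [List.pairwise_append, List.pairwise_cons]
    refine ⟨(Finset.pairwise_sort _ _).sublist (List.take_sublist _ _),
      ⟨fun b hb => (h2 b hb).le, (Finset.pairwise_sort _ _).sublist (List.drop_sublist _ _)⟩, ?_⟩
    · intro y hy z hz
      rcases List.mem_cons.mp hz with rfl | hz'
      · exact (h1 y hy).le
      · exact ((h1 y hy).trans (h2 z hz')).le

lemma enum_insert (ξ x : Ordinal) (s : Finset Ordinal) (hx : x ∉ s) (j : ℕ)
    (hj : j ≤ s.card)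
    (h1 : ∀ y ∈ (s.sort (· ≤ ·)).take j, y < x)
    (h2 : ∀ y ∈ (s.sort (· ≤ ·)).drop j, x < y) :
    (∀ i ≤ j, finsetEnum ξ (insert x s) i = finsetEnum ξ s i) ∧
    finsetEnum ξ (insert x s) (j + 1) = x ∧
    (∀ m, j ≤ m → finsetEnum ξ (insert x s) (m + 2) = finsetEnum ξ s (m + 1)) := by
  have hsplit := sort_insert_split x s hx j h1 h2
  set L : List Ordinal := s.sort (· ≤ ·) with hL
  have hlen : L.length = s.card := Finset.length_sort _
  have htlen : (L.take j).length = j := by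
    rw [List.length_take, hlen]; exact Nat.min_eq_left hj
  refine ⟨?_, ?_, ?_⟩
  · intro i hi
    cases i with
    | zero => rfl
    | succ m =>
      have hm : m < j := Nat.lt_of_succ_le hi
      show ((insert x s).sort (· ≤ ·)).getD m 0 = L.getD m 0
      rw [hsplit]
      rw [List.getD_append _ _ _ _ (by rw [htlen]; exact hm)]
      have hmL : m < L.length := lt_of_lt_of_le hm (by rw [hlen] at *; omega)
      rw [List.getD_eq_getElem _ 0 (by rw [htlen]; exact hm),
        List.getD_eq_getElem _ 0 hmL]
      exact List.getElem_take
  · show ((insert x s).sort (· ≤ ·)).getD j 0 = x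
    rw [hsplit, List.getD_append_right _ _ _ _ (by rw [htlen]), htlen]
    simp
  · intro m hm
    show ((insert x s).sort (· ≤ ·)).getD (m + 1) 0 = L.getD m 0
    rw [hsplit, List.getD_append_right _ _ _ _ (by rw [htlen]; omega), htlen]
    have : m + 1 - j = (m - j) + 1 := by omega
    rw [this]
    show (L.drop j).getD (m - j) 0 = L.getD m 0
    rw [List.getD_eq_getElem?_getD, List.getD_eq_getElem?_getD, List.getElem?_drop]
    congr 2
    omega

lemma mem_list_index {L : List Ordinal} {y : Ordinal} (hy : y ∈ L) :
    ∃ i, i < L.length ∧ L.getD i 0 = y := by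
  obtain ⟨i, hi, he⟩ := List.mem_iff_getElem.mp hy
  exact ⟨i, hi, by rw [List.getD_eq_getElem _ 0 hi]; exact he⟩


/-- If `0 < k`, `0 < l`, `ξ` is an ordinal, `a` is a
`(k+1)`-element set of ordinals `≥ ξ`, `b` is a `k`-element set of ordinals
`≥ ξ`, and `α ∈ a` is such that `E_{l+1}^ξ(a \ {α}, b)` holds, then there is an
ordinal `β` with `ξ ≤ β` and `β ∉ b` such that `E_l^ξ(a, b ∪ {β})` holds. -/
theorem stmt1 (k l : ℕ) (hk : 0 < k) (hl : 0 < l) (ξ : Ordinal)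
    (a b : Finset Ordinal) (hacard : a.card = k + 1) (hbcard : b.card = k)
    (ha : ∀ γ ∈ a, ξ ≤ γ) (hb : ∀ γ ∈ b, ξ ≤ γ)
    (α : Ordinal) (hα : α ∈ a)
    (h : ERel (l + 1) ξ (a.erase α) b) :
    ∃ β : Ordinal, ξ ≤ β ∧ β ∉ b ∧ ERel l ξ a (insert β b) := by
  classical
  set E : Finset Ordinal := a.erase α with hE
  have hEcard : E.card = k := by
    rw [hE, Finset.card_erase_of_mem hα, hacard]
    omega
  have hαE : α ∉ E := Finset.notMem_erase _ _
  have haE : a = insert α E := (Finset.insert_erase hα).symm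
  set lE : List Ordinal := E.sort (· ≤ ·) with hlE
  set lb : List Ordinal := b.sort (· ≤ ·) with hlb
  have hlElen : lE.length = k := by rw [hlE, Finset.length_sort, hEcard]
  have hlblen : lb.length = k := by rw [hlb, Finset.length_sort, hbcard]
  set p : Ordinal → Bool := fun y => decide (y < α) with hp
  set j : ℕ := (lE.takeWhile p).length with hjdef
  have htake : lE.take j = lE.takeWhile p :=
    (List.prefix_iff_eq_take.mp (List.takeWhile_prefix p)).symm
  have hdrop : lE.drop j = lE.dropWhile p := by
    conv_lhs => rw [← List.takeWhile_append_dropWhile (p := p) (l := lE)]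
    exact List.drop_left
  have hjk : j ≤ k := by
    rw [← hlElen]; exact (List.takeWhile_prefix p).sublist.length_le
  have h1a : ∀ y ∈ lE.take j, y < α := by
    intro y hy; rw [htake] at hy
    have := List.mem_takeWhile_imp hy
    simpa [hp] using this
  have h2a : ∀ y ∈ lE.drop j, α < y := by
    intro y hy
    have hyE : y ∈ E := (Finset.mem_sort _).mp (List.drop_subset _ _ hy)
    rw [hdrop] at hy
    have hxy : α ≤ y := mem_dropWhile_ge (Finset.pairwise_sort _ _) hy
    refine lt_of_le_of_ne hxy ?_
    intro he
    exact hαE (he ▸ hyE)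
  obtain ⟨ea1, ea2, ea3⟩ := enum_insert ξ α E hαE j (hEcard ▸ hjk) h1a h2a
  rw [← haE] at ea1 ea2 ea3
  set A : Ordinal := finsetEnum ξ E j with hA
  set B : Ordinal := finsetEnum ξ b j with hB
  have hsortE : lE.Pairwise (· ≤ ·) := Finset.pairwise_sort _ _
  have hsortb : lb.Pairwise (· ≤ ·) := Finset.pairwise_sort _ _
  have hAα : A ≤ α := by
    cases hj : j with
    | zero => rw [hA, hj]; exact ha α hα
    | succ m =>
      have hm : m < lE.length := by rw [hlElen]; omega
      have hmem : lE.getD m 0 ∈ lE.take j := by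
        have h1 : m < (lE.take j).length := by rw [List.length_take]; omega
        have := List.getElem_mem h1
        rwa [List.getElem_take, ← List.getD_eq_getElem lE 0 hm] at this
      rw [hA, hj]
      exact (h1a _ hmem).le
  have hAαs : 0 < j → A < α := by
    intro hj0
    obtain ⟨m, hm⟩ : ∃ m, j = m + 1 := ⟨j - 1, by omega⟩
    have hmlen : m < lE.length := by rw [hlElen]; omega
    have hmem : lE.getD m 0 ∈ lE.take j := by
      have h1 : m < (lE.take j).length := by rw [List.length_take]; omega
      have := List.getElem_mem h1
      rwa [List.getElem_take, ← List.getD_eq_getElem lE 0 hmlen] at this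
    rw [hA, hm]
    exact h1a _ hmem
  have hBξ : ξ ≤ B := by
    cases hj : j with
    | zero => rw [hB, hj]; exact le_of_eq (by simp [finsetEnum])
    | succ m =>
      have hm : m < lb.length := by rw [hlblen]; omega
      have hmem : lb.getD m 0 ∈ lb := by
        rw [List.getD_eq_getElem lb 0 hm]; exact List.getElem_mem hm
      rw [hB, hj]
      exact hb _ ((Finset.mem_sort _).mp hmem)
  -- value of B for positive j
  have hBval : ∀ m, j = m + 1 → B = lb.getD m 0 := by
    intro m hm; rw [hB, hm]; simp [finsetEnum, hlb]
  have hbub : ∀ y ∈ lb.take j, 0 < j → ∃ m, j = m + 1 ∧ y ≤ B := by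
    intro y hy hj0
    obtain ⟨m, hm⟩ : ∃ m, j = m + 1 := ⟨j - 1, by omega⟩
    obtain ⟨i, hi, he⟩ := List.mem_iff_getElem.mp hy
    have hilen : i < j := by
      have := hi; rw [List.length_take] at this; omega
    have hib : i < lb.length := by rw [hlblen]; omega
    have hyi : y = lb.getD i 0 := by
      rw [List.getD_eq_getElem lb 0 hib, ← he, List.getElem_take]
    refine ⟨m, hm, ?_⟩
    rw [hyi, hBval m hm]
    exact sorted_le_getD hsortb (by omega) (by rw [hlblen]; omega)
  rcases eq_or_lt_of_le hjk with hjeq | hjlt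
  · -- CASE j = k : α is above everything in E
    have hj0 : 0 < j := by omega
    have hAltα : A < α := hAαs hj0
    set σ : Ordinal := α - A with hσdef
    have hAσ : A + σ = α := Ordinal.add_sub_cancel_of_le hAα
    have hσ0 : σ ≠ 0 := by
      intro h0; rw [h0, add_zero] at hAσ; exact (ne_of_lt hAltα) hAσ
    set β : Ordinal := B + σ with hβdef
    have hBβ : B < β := by
      rw [hβdef]
      calc B = B + 0 := (add_zero _).symm
        _ < B + σ := add_lt_add_right (pos_iff_ne_zero.mpr hσ0) _
    have h1b : ∀ y ∈ lb.take j, y < β := by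
      intro y hy
      obtain ⟨m, _, hyB⟩ := hbub y hy hj0
      exact lt_of_le_of_lt hyB hBβ
    have h2b : ∀ y ∈ lb.drop j, β < y := by
      have : lb.drop j = [] := by
        apply List.drop_eq_nil_of_le; rw [hlblen]; omega
      rw [this]; intro y hy; simp at hy
    have hβb : β ∉ b := by
      intro hmem
      have hy : β ∈ lb := (Finset.mem_sort _).mpr hmem
      have : β ∈ lb.take j := by
        rw [List.take_of_length_le (by rw [hlblen]; omega)]; exact hy
      exact absurd (h1b β this) (lt_irrefl β)
    obtain ⟨eb1, eb2, eb3⟩ := enum_insert ξ β b hβb j (by rw [hbcard]; exact hjk) h1b h2b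
    refine ⟨β, hBξ.trans hBβ.le, hβb, ?_, ?_⟩
    · rw [hacard, Finset.card_insert_of_notMem hβb, hbcard]
    · intro i hi
      rw [hacard] at hi
      rcases Nat.lt_or_ge i k with hik | hik
      · -- downgrade segment i
        obtain ⟨μ, ν, ρ, hh1, hh2, hh3, hh4⟩ := h.2 i (by rw [hEcard]; exact hik)
        push_cast at hh1 hh2 hh3
        obtain ⟨μ', ν', ρ', d1, d2, d3, d4⟩ :=
          downgrade l (finsetEnum ξ E i) (finsetEnum ξ E (i + 1))
            (finsetEnum ξ b i) (finsetEnum ξ b (i + 1)) μ ν ρ hh1 hh2 hh3 hh4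
        refine ⟨μ', ν', ρ', ?_, ?_, d3, d4⟩
        · rw [ea1 i (by omega), ea1 (i + 1) (by omega)]; exact d1
        · rw [eb1 i (by omega), eb1 (i + 1) (by omega)]; exact d2
      · -- i = k = j : new last segment
        have hik' : i = k := by omega
        refine ⟨σ / Ordinal.omega0 ^ (l : Ordinal), σ / Ordinal.omega0 ^ (l : Ordinal),
          σ % Ordinal.omega0 ^ (l : Ordinal), ?_, ?_, ?_, ?_⟩
        · rw [hik', ← hjeq, ea2, ea1 j le_rfl, ← hA, ← hAσ, add_assoc,
            Ordinal.div_add_mod]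
        · rw [hik', ← hjeq, eb2, eb1 j le_rfl, ← hB, hβdef, add_assoc,
            Ordinal.div_add_mod]
        · exact Ordinal.mod_lt _ (Ordinal.opow_pos _ Ordinal.omega0_pos).ne'
        · intro hmin; rw [min_self] at hmin; exact ⟨hmin, hmin⟩
  · -- CASE j < k
    set A' : Ordinal := finsetEnum ξ E (j + 1) with hA'
    set B' : Ordinal := finsetEnum ξ b (j + 1) with hB'
    have hA'val : A' = lE.getD j 0 := by rw [hA']; simp [finsetEnum, hlE]
    have hB'val : B' = lb.getD j 0 := by rw [hB']; simp [finsetEnum, hlb]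
    have hαA' : α < A' := by
      have hjlen : j < lE.length := by rw [hlElen]; exact hjlt
      have hmem : lE.getD j 0 ∈ lE.drop j := by
        have h0 : 0 < (lE.drop j).length := by rw [List.length_drop]; omega
        have := List.getElem_mem h0
        rwa [List.getElem_drop, ← List.getD_eq_getElem lE 0 (by omega : j + 0 < lE.length)] at this
      rw [hA'val]
      exact h2a _ hmem
    obtain ⟨μ, ν, ρ, hh1, hh2, hh3, hh4⟩ := h.2 j (by rw [hEcard]; exact hjlt)
    push_cast at hh1 hh2 hh3
    obtain ⟨β, hBβle, hβB', hBβlt, ⟨μ₁, ν₁, ρ₁, s11, s12, s13, s14⟩,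
        ⟨μ₂, ν₂, ρ₂, s21, s22, s23, s24⟩⟩ :=
      key_construct l A B α A' B' μ ν ρ hAα hαA' hh1 hh2 hh3 hh4
    have h1b : ∀ y ∈ lb.take j, y < β := by
      intro y hy
      have hj0 : 0 < j := by
        by_contra h0
        have : j = 0 := by omega
        rw [this, List.take_zero] at hy; simp at hy
      obtain ⟨m, _, hyB⟩ := hbub y hy hj0
      exact lt_of_le_of_lt hyB (hBβlt (hAαs hj0))
    have h2b : ∀ y ∈ lb.drop j, β < y := by
      intro y hy
      obtain ⟨i, hi, he⟩ := List.mem_iff_getElem.mp hy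
      have hjlen : j < lb.length := by rw [hlblen]; exact hjlt
      have hji : j + i < lb.length := by
        have := hi; rw [List.length_drop] at this; omega
      have hyv : y = lb.getD (j + i) 0 := by
        rw [List.getD_eq_getElem lb 0 hji, ← he, List.getElem_drop]
      have : lb.getD j 0 ≤ lb.getD (j + i) 0 :=
        sorted_le_getD hsortb (by omega) hji
      rw [hyv]
      exact lt_of_lt_of_le (hB'val ▸ hβB') this
    have hβb : β ∉ b := by
      intro hmem
      have hy : β ∈ lb := (Finset.mem_sort _).mpr hmem
      obtain ⟨i, hi, he⟩ := mem_list_index hy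
      rcases Nat.lt_or_ge i j with hij | hij
      · have hmem' : β ∈ lb.take j := by
          have h1 : i < (lb.take j).length := by rw [List.length_take]; omega
          have := List.getElem_mem h1
          rw [List.getElem_take, ← List.getD_eq_getElem lb 0 hi, he] at this
          exact this
        exact absurd (h1b β hmem') (lt_irrefl β)
      · have : lb.getD j 0 ≤ lb.getD i 0 :=
          sorted_le_getD hsortb hij hi
        rw [he] at this
        exact absurd (lt_of_lt_of_le (hB'val ▸ hβB') this) (lt_irrefl β)
    obtain ⟨eb1, eb2, eb3⟩ := enum_insert ξ β b hβb j (by rw [hbcard]; exact hjk) h1b h2b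
    refine ⟨β, hBξ.trans hBβle, hβb, ?_, ?_⟩
    · rw [hacard, Finset.card_insert_of_notMem hβb, hbcard]
    · intro i hi
      rw [hacard] at hi
      rcases Nat.lt_or_ge i j with hij | hij
      · obtain ⟨μ', ν', ρ', hh1', hh2', hh3', hh4'⟩ := h.2 i (by rw [hEcard]; omega)
        push_cast at hh1' hh2' hh3'
        obtain ⟨μ'', ν'', ρ'', d1, d2, d3, d4⟩ :=
          downgrade l (finsetEnum ξ E i) (finsetEnum ξ E (i + 1))
            (finsetEnum ξ b i) (finsetEnum ξ b (i + 1)) μ' ν' ρ' hh1' hh2' hh3' hh4'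
        refine ⟨μ'', ν'', ρ'', ?_, ?_, d3, d4⟩
        · rw [ea1 i (by omega), ea1 (i + 1) (by omega)]; exact d1
        · rw [eb1 i (by omega), eb1 (i + 1) (by omega)]; exact d2
      · rcases Nat.lt_or_ge i (j + 1) with hij1 | hij1
        · -- i = j
          have hieq : i = j := by omega
          refine ⟨μ₁, ν₁, ρ₁, ?_, ?_, s13, s14⟩
          · rw [hieq, ea2, ea1 j le_rfl, ← hA]; exact s11
          · rw [hieq, eb2, eb1 j le_rfl, ← hB]; exact s12
        · rcases Nat.lt_or_ge i (j + 2) with hij2 | hij2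
          · -- i = j + 1
            have hieq : i = j + 1 := by omega
            refine ⟨μ₂, ν₂, ρ₂, ?_, ?_, s23, s24⟩
            · have he3 : finsetEnum ξ a (j + 2) = finsetEnum ξ E (j + 1) := ea3 j le_rfl
              rw [hieq, ea2, he3, ← hA']; exact s21
            · have he3 : finsetEnum ξ (insert β b) (j + 2) = finsetEnum ξ b (j + 1) :=
                eb3 j le_rfl
              rw [hieq, eb2, he3, ← hB']; exact s22
          · -- i ≥ j + 2
            obtain ⟨m, hm⟩ : ∃ m, i = m + 2 := ⟨i - 2, by omega⟩
            have hmj : j ≤ m := by omega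
            obtain ⟨μ', ν', ρ', hh1', hh2', hh3', hh4'⟩ :=
              h.2 (m + 1) (by rw [hEcard]; omega)
            push_cast at hh1' hh2' hh3'
            obtain ⟨μ'', ν'', ρ'', d1, d2, d3, d4⟩ :=
              downgrade l (finsetEnum ξ E (m + 1)) (finsetEnum ξ E (m + 2))
                (finsetEnum ξ b (m + 1)) (finsetEnum ξ b (m + 2)) μ' ν' ρ' hh1' hh2' hh3' hh4'
            refine ⟨μ'', ν'', ρ'', ?_, ?_, d3, d4⟩
            · rw [hm, ea3 m hmj, show m + 2 + 1 = m + 1 + 2 from rfl, ea3 (m + 1) (by omega)]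
              exact d1
            · rw [hm, eb3 m hmj, show m + 2 + 1 = m + 1 + 2 from rfl, eb3 (m + 1) (by omega)]
              exact d2
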